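/- Let T : ω → X be a continuous linear operator from ω = K^ℕ (product topology) to a topological vector space X that contains no subspace isomorphic to ω. Then T has finite rank. -/

import Mathlib

open Submodule Filter Topology Finset

set_option linter.unusedSectionVars false
set_option maxHeartbeats 1000000

section OmegaMin

variable {𝕜 : Type*} [RCLike 𝕜] {X : Type*}
    [AddCommGroup X] [Module 𝕜 X] [TopologicalSpace X] [IsTopologicalAddGroup X]
    [ContinuousSMul 𝕜 X] [T2Space X]

/-- The coordinate subspace of sequences vanishing below `n`. -/
def omegaZ (𝕜 : Type*) [RCLike 𝕜] (n : ℕ) : Submodule 𝕜 (ℕ → 𝕜) where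
  carrier := {x | ∀ i < n, x i = 0}
  add_mem' := by intro a b ha hb i hi; simp [ha i hi, hb i hi]
  zero_mem' := by intro i hi; rfl
  smul_mem' := by intro c a ha i hi; simp [ha i hi]

/-- Closure of the image of `omegaZ n` under `T`. -/
noncomputable def omegaY (T : (ℕ → 𝕜) →L[𝕜] X) (n : ℕ) : Submodule 𝕜 X :=
  ((omegaZ 𝕜 n).map (T : (ℕ → 𝕜) →ₗ[𝕜] X)).topologicalClosure

lemma omegaY_antitone (T : (ℕ → 𝕜) →L[𝕜] X) : Antitone (omegaY T) := by
  intro a b hab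
  apply Submodule.topologicalClosure_mono
  apply Submodule.map_mono
  intro x hx i hi
  exact hx i (hi.trans_le hab)

lemma isClosed_omegaY (T : (ℕ → 𝕜) →L[𝕜] X) (n : ℕ) : IsClosed ((omegaY T n : Set X)) :=
  Submodule.isClosed_topologicalClosure _

lemma mem_omegaY (T : (ℕ → 𝕜) →L[𝕜] X) {n : ℕ} {x : ℕ → 𝕜} (hx : x ∈ omegaZ 𝕜 n) :
    T x ∈ omegaY T n :=
  Submodule.le_topologicalClosure _ ⟨x, hx, rfl⟩

/-- The intersection of the `omegaY` is trivial. -/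
lemma omegaY_inter (T : (ℕ → 𝕜) →L[𝕜] X) (v : X) (hv : ∀ n, v ∈ omegaY T n) : v = 0 := by
  by_contra hv0
  obtain ⟨V, ⟨hV, hVc⟩, hVsub⟩ := (closed_nhds_basis (0 : X)).mem_iff.mp
    (by exact isOpen_compl_singleton.mem_nhds (by simpa using (Ne.symm hv0)) :
      ({v}ᶜ : Set X) ∈ 𝓝 (0 : X))
  have hTV : T ⁻¹' V ∈ 𝓝 (0 : ℕ → 𝕜) := by
    have := T.continuous.continuousAt (x := 0)
    rw [ContinuousAt, map_zero] at this
    exact this hV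
  rw [nhds_pi, Filter.mem_pi] at hTV
  obtain ⟨I, hIfin, t, ht, hsub⟩ := hTV
  obtain ⟨N, hN⟩ := hIfin.bddAbove
  have hZ : ∀ x ∈ omegaZ 𝕜 (N + 1), T x ∈ V := by
    intro x hx
    apply hsub
    intro i hi
    have : x i = 0 := hx i (Nat.lt_succ_of_le (hN hi))
    rw [this]
    exact mem_of_mem_nhds (ht i)
  have : v ∈ V := by
    have hclos : (omegaY T (N + 1) : Set X) ⊆ V := by
      apply hVc.closure_subset_iff.mpr ?_
      rintro _ ⟨x, hx, rfl⟩
      exact hZ x hx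
    exact hclos (hv (N + 1))
  exact hVsub this rfl

/-- Compactness lemma: an element of all `S ⊔ omegaY T m` lies in the
finite-dimensional subspace `S`. -/
lemma mem_of_forall_mem_sup_omegaY (T : (ℕ → 𝕜) →L[𝕜] X) (S : Submodule 𝕜 X)
    [FiniteDimensional 𝕜 S] (w : X) (hw : ∀ m, w ∈ S ⊔ omegaY T m) : w ∈ S := by
  classical
  set d := Module.finrank 𝕜 S with hd
  have e : (Fin d → 𝕜) ≃L[𝕜] S :=
    ContinuousLinearEquiv.ofFinrankEq (by simp [hd])
  have hdec : ∀ m, ∃ s ∈ S, ∃ y ∈ omegaY T m, s + y = w := fun m => mem_sup.mp (hw m)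
  choose s hs y hy hsy using hdec
  set c : ℕ → (Fin d → 𝕜) := fun m => e.symm ⟨s m, hs m⟩ with hc
  set τ : ℕ → 𝕜 := fun m => ((max 1 ‖c m‖)⁻¹ : ℝ) with hτ
  have hmaxpos : ∀ m, (0:ℝ) < max 1 ‖c m‖ := fun m => lt_max_of_lt_left one_pos
  have hτnorm : ∀ m, ‖τ m‖ = (max 1 ‖c m‖)⁻¹ := by
    intro m
    simp [hτ, abs_of_pos (inv_pos.mpr (hmaxpos m))]
  have hbdd : ∀ m, (τ m, τ m • c m) ∈ Metric.closedBall (0 : 𝕜 × (Fin d → 𝕜)) 1 := by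
    intro m
    rw [Metric.mem_closedBall, dist_zero_right, Prod.norm_def]
    have h1 : ‖τ m‖ ≤ 1 := by
      rw [hτnorm m]
      rw [inv_le_one_iff₀]
      right; exact le_max_left _ _
    have h2 : ‖τ m • c m‖ ≤ 1 := by
      rw [norm_smul, hτnorm m]
      rw [inv_mul_le_iff₀ (hmaxpos m), mul_one]
      exact le_max_right _ _
    exact max_le h1 h2
  haveI : ProperSpace (Fin d → 𝕜) := FiniteDimensional.proper_rclike 𝕜 _
  obtain ⟨⟨tl, cl⟩, -, φ, hφ, hconv⟩ :=
    tendsto_subseq_of_bounded (Metric.isBounded_closedBall) hbdd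
  have htl : Tendsto (fun m => τ (φ m)) atTop (𝓝 tl) :=
    (continuous_fst.tendsto _).comp hconv
  have hcl : Tendsto (fun m => τ (φ m) • c (φ m)) atTop (𝓝 cl) :=
    (continuous_snd.tendsto _).comp hconv
  have hyconv : Tendsto (fun m => τ (φ m) • y (φ m)) atTop (𝓝 (tl • w - (e cl : X))) := by
    have heq : ∀ m, τ (φ m) • y (φ m) = τ (φ m) • w - ((e (τ (φ m) • c (φ m)) : S) : X) := by
      intro m
      have : (e (τ (φ m) • c (φ m)) : S) = τ (φ m) • ⟨s (φ m), hs (φ m)⟩ := by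
        rw [map_smul, hc]; simp
      rw [this]
      push_cast
      rw [← hsy (φ m)]
      simp [smul_add]
    rw [funext heq]
    apply Tendsto.sub
    · exact htl.smul tendsto_const_nhds
    · exact (continuous_subtype_val.tendsto _).comp ((e.continuous.tendsto _).comp hcl)
  have hystar : tl • w - (e cl : X) = 0 := by
    apply omegaY_inter T
    intro M
    apply (isClosed_omegaY T M).mem_of_tendsto hyconv
    filter_upwards [Filter.eventually_ge_atTop M] with m hm
    exact Submodule.smul_mem _ _ (omegaY_antitone T (hm.trans (hφ.le_apply)) (hy (φ m)))
  have hkey : tl • w = (e cl : X) := sub_eq_zero.mp hystar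
  by_cases htl0 : tl = 0
  · exfalso
    have hecl : (e cl : X) = 0 := by rw [← hkey, htl0, zero_smul]
    have hcl0 : cl = 0 := by
      have : e cl = (0 : S) := Subtype.ext (by simpa using hecl)
      simpa using congrArg e.symm this
    have hev : ∀ᶠ m in atTop, ‖τ (φ m) • c (φ m)‖ = 1 := by
      have : Tendsto (fun m => ‖τ (φ m)‖) atTop (𝓝 0) := by
        rw [htl0] at htl
        simpa using htl.norm
      filter_upwards [this.eventually (gt_mem_nhds (one_pos : (0:ℝ) < 1))] with m hm
      rw [norm_smul, hτnorm]
      have hgt : 1 < ‖c (φ m)‖ := by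
        by_contra hle
        push_neg at hle
        rw [hτnorm, max_eq_left hle] at hm
        norm_num at hm
      rw [max_eq_right hgt.le]
      field_simp
    have : Tendsto (fun m => ‖τ (φ m) • c (φ m)‖) atTop (𝓝 ‖cl‖) := hcl.norm
    have h1 : ‖cl‖ = 1 := tendsto_nhds_unique this ((tendsto_congr' hev).mpr tendsto_const_nhds)
    rw [hcl0] at h1
    norm_num at h1
  · have hw' : w = tl⁻¹ • ((e cl : S) : X) := by
      rw [← hkey, smul_smul, inv_mul_cancel₀ htl0, one_smul]
    rw [hw']
    exact Submodule.smul_mem S _ (e cl).2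

/-- Sup of a finite-dimensional and a closed submodule is closed. -/
lemma isClosed_sup_of_finiteDimensional (S C : Submodule 𝕜 X) [FiniteDimensional 𝕜 S]
    (hC : IsClosed (C : Set X)) : IsClosed ((S ⊔ C : Submodule 𝕜 X) : Set X) := by
  haveI : IsClosed (C : Set X) := hC
  have heq : (S ⊔ C : Submodule 𝕜 X) = (S.map C.mkQ).comap C.mkQ := by
    rw [Submodule.comap_map_eq, Submodule.ker_mkQ]
  have hfd : FiniteDimensional 𝕜 (S.map C.mkQ) := Module.Finite.map _ _
  have hclosed : IsClosed ((S.map C.mkQ : Submodule 𝕜 (X ⧸ C)) : Set (X ⧸ C)) :=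
    Submodule.closed_of_finiteDimensional _
  rw [heq]
  exact hclosed.preimage (C.isOpenQuotientMap_mkQ.continuous)

/-- Step existence lemma. -/
lemma omega_step (T : (ℕ → 𝕜) →L[𝕜] X)
    (hbig : ¬ FiniteDimensional 𝕜 (span 𝕜 (Set.range fun i => T (Pi.single i (1:𝕜)))))
    (n : ℕ) (S : Submodule 𝕜 X) [FiniteDimensional 𝕜 S] :
    ∃ p : ℕ × (ℕ → 𝕜), n < p.1 ∧ (∀ i, p.2 i ≠ 0 → n ≤ i ∧ i < p.1) ∧
      T p.2 ∉ S ⊔ omegaY T p.1 := by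
  by_contra hcon
  push_neg at hcon
  have hsingle : ∀ i, n ≤ i → T (Pi.single i (1:𝕜)) ∈ S := by
    intro i hi
    apply mem_of_forall_mem_sup_omegaY T S
    intro m
    have h1 : T (Pi.single i (1:𝕜)) ∈ S ⊔ omegaY T (max m (i+1)) := by
      apply hcon (max m (i+1), Pi.single i (1:𝕜))
        (lt_of_lt_of_le (Nat.lt_succ_of_le hi) (le_max_right _ _))
      intro j hj
      have hj' : (Pi.single i (1:𝕜) : ℕ → 𝕜) j ≠ 0 := hj
      have : j = i := by
        by_contra hne
        rw [Pi.single_apply, if_neg hne] at hj'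
        exact hj' rfl
      subst this
      exact ⟨hi, lt_of_lt_of_le (Nat.lt_succ_self _) (le_max_right _ _)⟩
    exact sup_le_sup_left (omegaY_antitone T (le_max_left _ _)) S h1
  apply hbig
  have hle : span 𝕜 (Set.range fun i => T (Pi.single i (1:𝕜))) ≤
      (span 𝕜 ((fun i => T (Pi.single i (1:𝕜))) '' (Set.Iio n))) ⊔ S := by
    rw [Submodule.span_le]
    rintro _ ⟨i, rfl⟩
    rcases lt_or_ge i n with hi | hi
    · exact Submodule.mem_sup_left (Submodule.subset_span ⟨i, hi, rfl⟩)
    · exact Submodule.mem_sup_right (hsingle i hi)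
  haveI : FiniteDimensional 𝕜 (span 𝕜 ((fun i => T (Pi.single i (1:𝕜))) '' (Set.Iio n))) :=
    FiniteDimensional.span_of_finite 𝕜 ((Set.finite_Iio n).image _)
  exact Submodule.finiteDimensional_of_le hle

end OmegaMin

section Jmap

variable {𝕜 : Type*} [RCLike 𝕜]

/-- The block-diagonal operator built from a sequence of blocks `x k`. -/
noncomputable def jmap (x : ℕ → (ℕ → 𝕜)) : (ℕ → 𝕜) →ₗ[𝕜] (ℕ → 𝕜) where
  toFun a := fun i => ∑ k ∈ Finset.range (i+1), a k * x k i
  map_add' a b := by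
    funext i
    simp [add_mul, Finset.sum_add_distrib]
  map_smul' c a := by
    funext i
    simp [Finset.mul_sum, mul_assoc]

lemma jmap_continuous (x : ℕ → (ℕ → 𝕜)) : Continuous (jmap x) := by
  show Continuous fun (a : ℕ → 𝕜) => fun i => ∑ k ∈ Finset.range (i+1), a k * x k i
  apply continuous_pi
  intro i
  exact continuous_finset_sum _ fun k _ => (continuous_apply k).mul continuous_const

variable {n : ℕ → ℕ} {x : ℕ → (ℕ → 𝕜)}
  (hnk : ∀ k, k ≤ n k) (hmono : Monotone n)
  (hz : ∀ k i, i < n k → x k i = 0)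

include hnk hz in
lemma jmap_single (K : ℕ) (c : 𝕜) : jmap x (Pi.single K c) = c • x K := by
  funext i
  show (∑ k ∈ Finset.range (i+1), (Pi.single K c : ℕ → 𝕜) k * x k i) = c * x K i
  rcases lt_or_ge i K with hiK | hiK
  · rw [Finset.sum_eq_zero, hz K i (lt_of_lt_of_le hiK (hnk K)), mul_zero]
    intro k hk
    rw [Finset.mem_range] at hk
    have : k ≠ K := by omega
    rw [Pi.single_apply, if_neg this, zero_mul]
  · rw [Finset.sum_eq_single_of_mem K (Finset.mem_range.mpr (by omega))]
    · rw [Pi.single_apply, if_pos rfl]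
    · intro k _ hk
      rw [Pi.single_apply, if_neg hk, zero_mul]

include hnk hz in
lemma jmap_trunc (a : ℕ → 𝕜) (K : ℕ) :
    jmap x a = (∑ k ∈ Finset.range K, a k • x k) +
      jmap x (fun k => if k < K then 0 else a k) := by
  funext i
  set M := max (i+1) K with hM
  have h1 : (jmap x a) i = ∑ k ∈ Finset.range M, a k * x k i := by
    apply Finset.sum_subset (Finset.range_subset_range.mpr (le_max_left _ _))
    intro k hk hnk'
    rw [Finset.mem_range] at hk
    rw [Finset.mem_range, not_lt] at hnk'
    rw [hz k i (by have := hnk k; omega), mul_zero]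
  have h2 : (∑ k ∈ Finset.range K, a k • x k) i
      = ∑ k ∈ Finset.range M, (if k < K then a k * x k i else 0) := by
    rw [Finset.sum_apply]
    rw [← Finset.sum_subset (Finset.range_subset_range.mpr (le_max_right (i+1) K))
      (fun k _ hk => by rw [Finset.mem_range, not_lt] at hk; rw [if_neg (by omega)])]
    apply Finset.sum_congr rfl
    intro k hk
    rw [Finset.mem_range] at hk
    rw [if_pos hk]
    rfl
  have h3 : (jmap x (fun k => if k < K then 0 else a k)) i
      = ∑ k ∈ Finset.range M, (if k < K then 0 else a k * x k i) := by
    show (∑ k ∈ Finset.range (i+1), (if k < K then 0 else a k) * x k i) = _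
    rw [← Finset.sum_subset (Finset.range_subset_range.mpr (le_max_left (i+1) K))
      (fun k _ hk => by
        rw [Finset.mem_range, not_lt] at hk
        rw [hz k i (by have := hnk k; omega)]
        simp)]
    apply Finset.sum_congr rfl
    intro k _
    rw [ite_mul, zero_mul]
  show (jmap x a) i = (∑ k ∈ Finset.range K, a k • x k) i + (jmap x _) i
  rw [h1, h2, h3, ← Finset.sum_add_distrib]
  apply Finset.sum_congr rfl
  intro k _
  by_cases hk : k < K <;> simp [hk]

include hmono hz in
lemma jmap_trunc_mem (a : ℕ → 𝕜) (K : ℕ) :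
    jmap x (fun k => if k < K then 0 else a k) ∈ omegaZ 𝕜 (n K) := by
  intro i hi
  show (∑ k ∈ Finset.range (i+1), (if k < K then 0 else a k) * x k i) = 0
  apply Finset.sum_eq_zero
  intro k _
  by_cases hk : k < K
  · rw [if_pos hk, zero_mul]
  · rw [hz k i (lt_of_lt_of_le hi (hmono (by omega))), mul_zero]

lemma trunc_succ (a : ℕ → 𝕜) (K : ℕ) :
    (fun k => if k < K then (0:𝕜) else a k) =
      Pi.single K (a K) + (fun k => if k < K + 1 then 0 else a k) := by
  funext k
  simp only [Pi.add_apply, Pi.single_apply]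
  rcases lt_trichotomy k K with hk | rfl | hk
  · rw [if_pos hk, if_neg (Nat.ne_of_lt hk), if_pos (by omega), zero_add]
  · rw [if_neg (lt_irrefl _), if_pos rfl, if_pos (by omega), add_zero]
  · rw [if_neg (by omega), if_neg (Nat.ne_of_gt hk), if_neg (by omega), zero_add]

end Jmap

/-- Recursion with full history. -/
noncomputable def seqRec {α : Type*} (F : (n : ℕ) → (Fin n → α) → α) : ℕ → α
  | n => F n (fun i => seqRec F i)
decreasing_by exact i.2

lemma seqRec_eq {α : Type*} (F : (n : ℕ) → (Fin n → α) → α) (n : ℕ) :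
    seqRec F n = F n (fun i => seqRec F i) := by
  rw [seqRec]

section Construction

variable {𝕜 : Type*} [RCLike 𝕜] {X : Type*}
    [AddCommGroup X] [Module 𝕜 X] [TopologicalSpace X] [IsTopologicalAddGroup X]
    [ContinuousSMul 𝕜 X] [T2Space X]

/-- The recursively chosen sequence of blocks. -/
noncomputable def omegaSeq (T : (ℕ → 𝕜) →L[𝕜] X)
    (hbig : ¬ FiniteDimensional 𝕜 (span 𝕜 (Set.range fun i => T (Pi.single i (1:𝕜))))) :
    ℕ → ℕ × (ℕ → 𝕜) :=
  seqRec (fun k hist =>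
    haveI : FiniteDimensional 𝕜 (span 𝕜 (Set.range fun i : Fin k => T ((hist i).2))) :=
      FiniteDimensional.span_of_finite 𝕜 (Set.finite_range _)
    Classical.choose (omega_step T hbig ((Finset.univ : Finset (Fin k)).sup fun i => (hist i).1)
      (span 𝕜 (Set.range fun i : Fin k => T ((hist i).2)))))

noncomputable def omegaM (T : (ℕ → 𝕜) →L[𝕜] X)
    (hbig : ¬ FiniteDimensional 𝕜 (span 𝕜 (Set.range fun i => T (Pi.single i (1:𝕜))))) :
    ℕ → ℕ := fun k => (omegaSeq T hbig k).1

noncomputable def omegaX (T : (ℕ → 𝕜) →L[𝕜] X)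
    (hbig : ¬ FiniteDimensional 𝕜 (span 𝕜 (Set.range fun i => T (Pi.single i (1:𝕜))))) :
    ℕ → ℕ → 𝕜 := fun k => (omegaSeq T hbig k).2

noncomputable def omegaN (T : (ℕ → 𝕜) →L[𝕜] X)
    (hbig : ¬ FiniteDimensional 𝕜 (span 𝕜 (Set.range fun i => T (Pi.single i (1:𝕜))))) :
    ℕ → ℕ := fun k => (Finset.univ : Finset (Fin k)).sup fun i => omegaM T hbig i

lemma omegaSeq_spec (T : (ℕ → 𝕜) →L[𝕜] X)
    (hbig : ¬ FiniteDimensional 𝕜 (span 𝕜 (Set.range fun i => T (Pi.single i (1:𝕜)))))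
    (k : ℕ) :
    omegaN T hbig k < omegaM T hbig k ∧
    (∀ i, omegaX T hbig k i ≠ 0 → omegaN T hbig k ≤ i ∧ i < omegaM T hbig k) ∧
    T (omegaX T hbig k) ∉
      (span 𝕜 (Set.range fun i : Fin k => T (omegaX T hbig i))) ⊔ omegaY T (omegaM T hbig k) := by
  haveI : FiniteDimensional 𝕜 (span 𝕜 (Set.range fun i : Fin k => T ((omegaSeq T hbig i).2))) :=
    FiniteDimensional.span_of_finite 𝕜 (Set.finite_range _)
  have h := Classical.choose_spec (omega_step T hbig
    ((Finset.univ : Finset (Fin k)).sup fun i => (omegaSeq T hbig i).1)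
    (span 𝕜 (Set.range fun i : Fin k => T ((omegaSeq T hbig i).2))))
  have he : omegaSeq T hbig k = Classical.choose (omega_step T hbig
      ((Finset.univ : Finset (Fin k)).sup fun i => (omegaSeq T hbig i).1)
      (span 𝕜 (Set.range fun i : Fin k => T ((omegaSeq T hbig i).2)))) := seqRec_eq _ k
  unfold omegaN omegaM omegaX
  rw [he]
  exact h

end Construction

/-- A continuous linear operator from ω = K^ℕ into a topological vector space
containing no subspace isomorphic to ω has finite rank. -/
theorem stmt_16 {𝕜 : Type*} [RCLike 𝕜] {X : Type*}
    [AddCommGroup X] [Module 𝕜 X] [TopologicalSpace X] [IsTopologicalAddGroup X]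
    [ContinuousSMul 𝕜 X] [T2Space X]
    (hnosub : ∀ W : Submodule 𝕜 X, ¬ Nonempty ((ℕ → 𝕜) ≃L[𝕜] W))
    (T : (ℕ → 𝕜) →L[𝕜] X) :
    Module.Finite 𝕜 (LinearMap.range (T : (ℕ → 𝕜) →ₗ[𝕜] X)) := by
  classical
  by_cases hfin : FiniteDimensional 𝕜 (span 𝕜 (Set.range fun i => T (Pi.single i (1:𝕜))))
  · -- finite rank case
    set A := span 𝕜 (Set.range fun i => T (Pi.single i (1:𝕜))) with hA
    have hmem : ∀ v : ℕ → 𝕜, T v ∈ A := by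
      intro v
      have hpart : Tendsto (fun N => (fun i => if i < N then v i else 0)) atTop (𝓝 v) := by
        rw [tendsto_pi_nhds]
        intro i
        apply Tendsto.congr' _ (tendsto_const_nhds (x := v i))
        filter_upwards [eventually_gt_atTop i] with N hN
        simp [hN]
      have hT : Tendsto (fun N => T (fun i => if i < N then v i else 0)) atTop (𝓝 (T v)) :=
        (T.continuous.tendsto v).comp hpart
      apply (A.closed_of_finiteDimensional).mem_of_tendsto hT
      apply Filter.Eventually.of_forall
      intro N
      have hsum : (fun i => if i < N then v i else 0)
          = ∑ j ∈ Finset.range N, v j • (Pi.single j (1:𝕜) : ℕ → 𝕜) := by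
        funext i
        rw [Finset.sum_apply]
        by_cases hi : i < N
        · rw [if_pos hi, Finset.sum_eq_single_of_mem i (Finset.mem_range.mpr hi)]
          · simp [Pi.single_apply]
          · intro j _ hj
            simp [Pi.single_apply, Ne.symm hj]
        · rw [if_neg hi, Finset.sum_eq_zero]
          intro j hj
          rw [Finset.mem_range] at hj
          have : i ≠ j := by omega
          simp [Pi.single_apply, this]
      rw [hsum, map_sum]
      apply Submodule.sum_mem
      intro j _
      rw [map_smul]
      exact Submodule.smul_mem _ _ (Submodule.subset_span ⟨j, rfl⟩)
    have hrange : LinearMap.range (T : (ℕ → 𝕜) →ₗ[𝕜] X) ≤ A := by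
      rintro _ ⟨v, rfl⟩
      exact hmem v
    exact Submodule.finiteDimensional_of_le hrange
  · exfalso
    set x : ℕ → ℕ → 𝕜 := omegaX T hfin with hxdef
    set m : ℕ → ℕ := omegaM T hfin with hmdef
    set n : ℕ → ℕ := omegaN T hfin with hndef
    have hspec : ∀ k, n k < m k ∧ (∀ i, x k i ≠ 0 → n k ≤ i ∧ i < m k) ∧
        T (x k) ∉ (span 𝕜 (Set.range fun i : Fin k => T (x i))) ⊔ omegaY T (m k) :=
      fun k => omegaSeq_spec T hfin k
    have hnm : ∀ k, n (k+1) = m k := by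
      intro k
      apply le_antisymm
      · apply Finset.sup_le
        intro i _
        rcases Nat.lt_or_ge (i : ℕ) k with h | h
        · exact le_trans (Finset.le_sup (f := fun i : Fin k => m i)
            (Finset.mem_univ (⟨i, h⟩ : Fin k))) (le_of_lt (hspec k).1)
        · have : (i : ℕ) = k := by omega
          rw [this]
      · exact Finset.le_sup (f := fun i : Fin (k+1) => m i)
          (Finset.mem_univ (⟨k, Nat.lt_succ_self k⟩ : Fin (k+1)))
    have hmono : StrictMono n := strictMono_nat_of_lt_succ (fun k => by
      rw [hnm]; exact (hspec k).1)
    have hnk : ∀ k, k ≤ n k := by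
      intro k
      induction k with
      | zero => exact Nat.zero_le _
      | succ k ih => rw [hnm k]; exact Nat.succ_le_of_lt (lt_of_le_of_lt ih (hspec k).1)
    have hsupp : ∀ k i, x k i ≠ 0 → n k ≤ i ∧ i < n (k+1) := by
      intro k i hi
      rw [hnm]
      exact (hspec k).2.1 i hi
    have hz : ∀ k i, i < n k → x k i = 0 := by
      intro k i hik
      by_contra h0
      have := (hsupp k i h0).1
      omega
    have hnotin : ∀ k, T (x k) ∉ (span 𝕜 (Set.range fun i : Fin k => T (x i)))
        ⊔ omegaY T (n (k+1)) := by
      intro k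
      rw [hnm]
      exact (hspec k).2.2
    set Φ : (ℕ → 𝕜) →ₗ[𝕜] X := (T : (ℕ → 𝕜) →ₗ[𝕜] X).comp (jmap x) with hΦdef
    have hΦcont : Continuous Φ := T.continuous.comp (jmap_continuous x)
    have hΦapp : ∀ a, Φ a = T (jmap x a) := fun a => rfl
    -- decomposition of Φ
    have hdec : ∀ (a : ℕ → 𝕜) (K : ℕ), Φ a = (∑ k ∈ Finset.range K, a k • T (x k)) +
        (a K • T (x K) + T (jmap x (fun k => if k < K + 1 then 0 else a k))) := by
      intro a K
      have h1 := jmap_trunc hnk hz a K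
      have h2 : jmap x (fun k => if k < K then (0:𝕜) else a k)
          = a K • x K + jmap x (fun k => if k < K + 1 then 0 else a k) := by
        rw [trunc_succ a K, map_add, jmap_single hnk hz K (a K)]
      rw [hΦapp, h1, h2, map_add, map_add, map_smul, map_sum]
      congr 1
      apply Finset.sum_congr rfl
      intro k _
      rw [map_smul]
    have htail : ∀ (a : ℕ → 𝕜) (K : ℕ),
        T (jmap x (fun k => if k < K then 0 else a k)) ∈ omegaY T (n K) :=
      fun a K => mem_omegaY T (jmap_trunc_mem hmono.monotone hz a K)
    have hsum_mem : ∀ (a : ℕ → 𝕜) (K : ℕ), (∑ k ∈ Finset.range K, a k • T (x k))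
        ∈ span 𝕜 (Set.range fun i : Fin K => T (x i)) := by
      intro a K
      apply Submodule.sum_mem
      intro k hk
      rw [Finset.mem_range] at hk
      exact Submodule.smul_mem _ _ (Submodule.subset_span ⟨⟨k, hk⟩, rfl⟩)
    -- injectivity
    have hker0 : ∀ a : ℕ → 𝕜, Φ a = 0 → a = 0 := by
      intro a ha
      by_contra h0
      have hex : ∃ K, a K ≠ 0 := by
        by_contra hall
        push_neg at hall
        exact h0 (funext fun K => hall K)
      have haK : a (Nat.find hex) ≠ 0 := Nat.find_spec hex
      set K := Nat.find hex with hKdef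
      have hmin : ∀ j, j < K → a j = 0 := fun j hj => not_not.mp (Nat.find_min hex hj)
      have h1 := hdec a K
      have hSig : (∑ k ∈ Finset.range K, a k • T (x k)) = 0 :=
        Finset.sum_eq_zero fun k hk => by rw [hmin k (Finset.mem_range.mp hk), zero_smul]
      rw [ha, hSig, zero_add] at h1
      have h3 : a K • T (x K) = -(T (jmap x fun k => if k < K + 1 then 0 else a k)) := by
        rw [eq_neg_iff_add_eq_zero]
        exact h1.symm
      have h4 : a K • T (x K) ∈ omegaY T (n (K+1)) := by
        rw [h3]
        exact neg_mem (htail a (K+1))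
      have h5 : T (x K) ∈ omegaY T (n (K+1)) := by
        have := Submodule.smul_mem (omegaY T (n (K+1))) (a K)⁻¹ h4
        rwa [smul_smul, inv_mul_cancel₀ haK, one_smul] at this
      exact hnotin K (Submodule.mem_sup_right h5)
    have hinj : Function.Injective Φ := by
      rw [injective_iff_map_eq_zero]
      exact hker0
    set W : Submodule 𝕜 X := LinearMap.range Φ with hWdef
    set eqW : (ℕ → 𝕜) ≃ₗ[𝕜] W := LinearEquiv.ofInjective Φ hinj with heqWdef
    set R : ℕ → Submodule 𝕜 X := fun K =>
      (span 𝕜 (Set.range fun i : Fin K => T (x i))) ⊔ omegaY T (n (K+1)) with hRdef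
    have hRclosed : ∀ K, IsClosed ((R K : Set X)) := by
      intro K
      haveI : FiniteDimensional 𝕜 (span 𝕜 (Set.range fun i : Fin K => T (x i))) :=
        FiniteDimensional.span_of_finite 𝕜 (Set.finite_range _)
      exact isClosed_sup_of_finiteDimensional _ _ (isClosed_omegaY T _)
    have hcrit : ∀ (a : ℕ → 𝕜) (K : ℕ), (a K = 0 ↔ Φ a ∈ R K) := by
      intro a K
      constructor
      · intro h0
        rw [hdec a K, h0, zero_smul, zero_add]
        exact Submodule.add_mem _ (Submodule.mem_sup_left (hsum_mem a K))
          (Submodule.mem_sup_right (htail a (K+1)))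
      · intro hmem
        by_contra h0
        have h1 : a K • T (x K) = Φ a - (∑ k ∈ Finset.range K, a k • T (x k))
            - T (jmap x (fun k => if k < K + 1 then 0 else a k)) := by
          rw [hdec a K]
          abel
        have h2 : a K • T (x K) ∈ R K := by
          rw [h1]
          exact sub_mem (sub_mem hmem (Submodule.mem_sup_left (hsum_mem a K)))
            (Submodule.mem_sup_right (htail a (K+1)))
        have h3 : T (x K) ∈ R K := by
          have := Submodule.smul_mem (R K) (a K)⁻¹ h2
          rwa [smul_smul, inv_mul_cancel₀ h0, one_smul] at this
        exact hnotin K h3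
    -- coordinates of the inverse are continuous
    have hcoordcont : ∀ K, Continuous fun v : W => (eqW.symm v) K := by
      intro K
      set gK : W →ₗ[𝕜] 𝕜 := (LinearMap.proj K).comp (eqW.symm : W →ₗ[𝕜] (ℕ → 𝕜)) with hgKdef
      have hker : (LinearMap.ker gK : Set W) = (Subtype.val) ⁻¹' (R K : Set X) := by
        ext v
        obtain ⟨a, ha⟩ := LinearMap.mem_range.mp v.2
        have hva : eqW.symm v = a := by
          have hv : v = eqW a := Subtype.ext (by rw [← ha]; rfl)
          rw [hv, LinearEquiv.symm_apply_apply]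
        simp only [SetLike.mem_coe, Set.mem_preimage, LinearMap.mem_ker]
        have hgKv : gK v = a K := by
          show (eqW.symm v) K = a K
          rw [hva]
        rw [hgKv, ← ha]
        exact hcrit a K
      have hcont : Continuous gK := LinearMap.continuous_of_isClosed_ker gK
        (by rw [hker]; exact (hRclosed K).preimage continuous_subtype_val)
      exact hcont
    apply hnosub W
    refine ⟨{ eqW with
      continuous_toFun := ?_
      continuous_invFun := ?_ }⟩
    · show Continuous fun a : ℕ → 𝕜 => eqW a
      apply continuous_induced_rng.mpr
      show Continuous fun a : ℕ → 𝕜 => ((eqW a : W) : X)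
      have : (fun a : ℕ → 𝕜 => ((eqW a : W) : X)) = fun a => Φ a := by
        funext a
        rfl
      rw [this]
      exact hΦcont
    · show Continuous fun v : W => eqW.symm v
      exact continuous_pi hcoordcont
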